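/- Let χ be the tail dependence matrix of a recursive max-weighted model on DAG D. Define coefficients λ_{jk} for j ∈ V, k ∈ an(j) recursively by λ_{jk} = 1 − ∑_{ℓ ∈ de(k) ∩ an(j)} λ_{jℓ}. Then for all i ∈ V and j ∈ An(i): b̄_{ji} = χ(j,i) − ∑_{k ∈ an(j)} λ_{jk} χ(k,i). -/

import Mathlib

open Finset
open scoped Classical

/-- `anc E j i`: there is a directed path (length ≥ 1) from `j` to `i`, i.e. `j` is a
strict ancestor of `i` in the directed graph with edge relation `E`. -/
def anc {d : ℕ} (E : Fin d → Fin d → Prop) (j i : Fin d) : Prop :=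
  Relation.TransGen E j i

/-- `Anc E j i`: `j` is an ancestor of `i`, including `j = i`. -/
def Anc {d : ℕ} (E : Fin d → Fin d → Prop) (j i : Fin d) : Prop :=
  j = i ∨ Relation.TransGen E j i

/-- The tail dependence coefficient associated to a (standardized) max-linear
coefficient matrix `B`: `χ(i,j) = ∑_{k ∈ An(i) ∩ An(j)} min (B k i) (B k j)`. -/
noncomputable def tdc {d : ℕ} (E : Fin d → Fin d → Prop)
    (B : Matrix (Fin d) (Fin d) ℝ) (i j : Fin d) : ℝ :=
  ∑ k ∈ Finset.univ.filter (fun k => Anc E k i ∧ Anc E k j), min (B k i) (B k j)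

theorem stmt11 {d : ℕ} (E : Fin d → Fin d → Prop)
    (hacyc : ∀ i, ¬ anc E i i)
    (B : Matrix (Fin d) (Fin d) ℝ)
    (hnn : ∀ j i, 0 ≤ B j i)
    (hsgn : ∀ j i, 0 < B j i ↔ Anc E j i)
    (hcol : ∀ i, ∑ k ∈ Finset.univ.filter (fun k => Anc E k i), B k i = 1)
    (hmw : ∀ i k j, anc E k i → anc E j k → B j i = B j k * B k i / B k k)
    (lam : Fin d → Fin d → ℝ)
    (hlam : ∀ j k, anc E k j → lam j k =
      1 - ∑ ℓ ∈ Finset.univ.filter (fun ℓ => anc E k ℓ ∧ anc E ℓ j), lam j ℓ) :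
    ∀ i j, Anc E j i →
      B j i = tdc E B j i -
        ∑ k ∈ Finset.univ.filter (fun k => anc E k j), lam j k * tdc E B k i := by
  have hAtrans : ∀ {a b c : Fin d}, Anc E a b → Anc E b c → Anc E a c := by
    rintro a b c (rfl | h1) (rfl | h2)
    · exact Or.inl rfl
    · exact Or.inr h2
    · exact Or.inr h1
    · exact Or.inr (h1.trans h2)
  have hdiag : ∀ k, 0 < B k k := fun k => (hsgn k k).2 (Or.inl rfl)
  -- max-weighted product formula including degenerate cases
  have hprod : ∀ i j k, Anc E j i → Anc E k j → B k i = B k j * (B j i / B j j) := by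
    intro i j k hji hkj
    rcases hkj with rfl | hkj
    · rw [mul_div_cancel₀ _ (ne_of_gt (hdiag k))]
    rcases hji with rfl | hji
    · rw [div_self (ne_of_gt (hdiag j)), mul_one]
    · rw [hmw i j k hji hkj, mul_div_assoc]
  -- chi formula
  have hchi : ∀ i j, Anc E j i →
      ∑ k ∈ Finset.univ.filter (fun k => Anc E k j), B k i = B j i / B j j := by
    intro i j hji
    calc ∑ k ∈ Finset.univ.filter (fun k => Anc E k j), B k i
        = ∑ k ∈ Finset.univ.filter (fun k => Anc E k j), B k j * (B j i / B j j) := by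
          refine Finset.sum_congr rfl fun k hk => ?_
          exact hprod i j k hji (Finset.mem_filter.mp hk).2
      _ = (∑ k ∈ Finset.univ.filter (fun k => Anc E k j), B k j) * (B j i / B j j) := by
          rw [Finset.sum_mul]
      _ = B j i / B j j := by rw [hcol j, one_mul]
  have hle1 : ∀ i j, Anc E j i → B j i / B j j ≤ 1 := by
    intro i j hji
    rw [← hchi i j hji, ← hcol i]
    refine Finset.sum_le_sum_of_subset_of_nonneg ?_ (fun k _ _ => hnn k i)
    intro k hk
    simp only [Finset.mem_filter, Finset.mem_univ, true_and] at hk ⊢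
    exact hAtrans hk hji
  -- tdc reduces to a plain sum when j is an ancestor of i
  have htdc : ∀ i j, Anc E j i →
      tdc E B j i = ∑ k ∈ Finset.univ.filter (fun k => Anc E k j), B k i := by
    intro i j hji
    unfold tdc
    have hset : Finset.univ.filter (fun k => Anc E k j ∧ Anc E k i)
        = Finset.univ.filter (fun k => Anc E k j) := by
      apply Finset.filter_congr
      intro k _
      exact ⟨fun h => h.1, fun h => ⟨h, hAtrans h hji⟩⟩
    rw [hset]
    refine Finset.sum_congr rfl fun k hk => ?_
    have hkj := (Finset.mem_filter.mp hk).2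
    have : B k i ≤ B k j := by
      rw [hprod i j k hji hkj]
      calc B k j * (B j i / B j j) ≤ B k j * 1 :=
            mul_le_mul_of_nonneg_left (hle1 i j hji) (hnn k j)
        _ = B k j := mul_one _
    exact min_eq_right this
  -- key combinatorial fact: ∑_{k ∈ De(ℓ) ∩ an(j)} λ_{jk} = 1
  have hkey : ∀ j ℓ, anc E ℓ j →
      ∑ k ∈ Finset.univ.filter (fun k => Anc E ℓ k ∧ anc E k j), lam j k = 1 := by
    intro j ℓ h
    have hset : Finset.univ.filter (fun k => Anc E ℓ k ∧ anc E k j)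
        = insert ℓ (Finset.univ.filter (fun k => anc E ℓ k ∧ anc E ℓ k ∧ anc E k j)) := by
      ext k
      simp only [Finset.mem_filter, Finset.mem_univ, true_and, Finset.mem_insert]
      simp only [Anc]
      constructor
      · rintro ⟨rfl | h1, h2⟩
        · exact Or.inl rfl
        · exact Or.inr ⟨h1, h1, h2⟩
      · rintro (rfl | ⟨h1, _, h2⟩)
        · exact ⟨Or.inl rfl, h⟩
        · exact ⟨Or.inr h1, h2⟩
    have hnotmem : ℓ ∉ Finset.univ.filter (fun k => anc E ℓ k ∧ anc E ℓ k ∧ anc E k j) := by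
      simp only [Finset.mem_filter, Finset.mem_univ, true_and]
      rintro ⟨h1, _⟩
      exact hacyc ℓ h1
    have hsimp : Finset.univ.filter (fun k => anc E ℓ k ∧ anc E ℓ k ∧ anc E k j)
        = Finset.univ.filter (fun k => anc E ℓ k ∧ anc E k j) := by
      apply Finset.filter_congr; intro k _; tauto
    rw [hset, Finset.sum_insert hnotmem, hsimp, hlam j ℓ h]
    ring
  -- main proof
  intro i j hji
  rw [htdc i j hji]
  have hrwk : ∑ k ∈ Finset.univ.filter (fun k => anc E k j), lam j k * tdc E B k i
      = ∑ k ∈ Finset.univ.filter (fun k => anc E k j),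
          lam j k * ∑ ℓ ∈ Finset.univ.filter (fun ℓ => Anc E ℓ k), B ℓ i := by
    refine Finset.sum_congr rfl fun k hk => ?_
    have hkj := (Finset.mem_filter.mp hk).2
    rw [htdc i k (hAtrans (Or.inr hkj) hji)]
  rw [hrwk]
  have hswap : ∑ k ∈ Finset.univ.filter (fun k => anc E k j),
        lam j k * ∑ ℓ ∈ Finset.univ.filter (fun ℓ => Anc E ℓ k), B ℓ i
      = ∑ ℓ ∈ Finset.univ.filter (fun ℓ => anc E ℓ j), B ℓ i := by
    calc ∑ k ∈ Finset.univ.filter (fun k => anc E k j),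
          lam j k * ∑ ℓ ∈ Finset.univ.filter (fun ℓ => Anc E ℓ k), B ℓ i
        = ∑ k : Fin d, ∑ ℓ : Fin d,
            if Anc E ℓ k ∧ anc E k j then lam j k * B ℓ i else 0 := by
          rw [Finset.sum_filter]
          refine Finset.sum_congr rfl fun k _ => ?_
          by_cases h : anc E k j
          · rw [if_pos h, Finset.mul_sum, Finset.sum_filter]
            refine Finset.sum_congr rfl fun ℓ _ => ?_
            by_cases h2 : Anc E ℓ k
            · rw [if_pos h2, if_pos ⟨h2, h⟩]
            · rw [if_neg h2, if_neg (fun hc => h2 hc.1)]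
          · rw [if_neg h]
            symm
            refine Finset.sum_eq_zero fun ℓ _ => ?_
            exact if_neg (fun hc => h hc.2)
      _ = ∑ ℓ : Fin d, ∑ k : Fin d,
            if Anc E ℓ k ∧ anc E k j then lam j k * B ℓ i else 0 := Finset.sum_comm
      _ = ∑ ℓ : Fin d, if anc E ℓ j then B ℓ i else 0 := by
          refine Finset.sum_congr rfl fun ℓ _ => ?_
          have hrw : ∑ k : Fin d, (if Anc E ℓ k ∧ anc E k j then lam j k * B ℓ i else 0)
              = (∑ k ∈ Finset.univ.filter (fun k => Anc E ℓ k ∧ anc E k j), lam j k) * B ℓ i := by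
            rw [Finset.sum_mul, Finset.sum_filter]
          rw [hrw]
          by_cases h : anc E ℓ j
          · rw [hkey j ℓ h, one_mul, if_pos h]
          · rw [if_neg h]
            have : Finset.univ.filter (fun k => Anc E ℓ k ∧ anc E k j) = ∅ := by
              apply Finset.filter_eq_empty_iff.mpr
              rintro k _ ⟨h1, h2⟩
              rcases h1 with rfl | h1
              · exact h h2
              · exact h (h1.trans h2)
            rw [this, Finset.sum_empty, zero_mul]
      _ = ∑ ℓ ∈ Finset.univ.filter (fun ℓ => anc E ℓ j), B ℓ i := (Finset.sum_filter _ _).symm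
  rw [hswap]
  have hsplit : Finset.univ.filter (fun k => Anc E k j)
      = insert j (Finset.univ.filter (fun k => anc E k j)) := by
    ext k
    simp only [Finset.mem_filter, Finset.mem_univ, true_and, Finset.mem_insert]
    simp only [Anc]
    tauto
  have hjnot : j ∉ Finset.univ.filter (fun k => anc E k j) := by
    simp only [Finset.mem_filter, Finset.mem_univ, true_and]
    exact hacyc j
  rw [hsplit, Finset.sum_insert hjnot]
  ring
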